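/- Let f, g and h be entire functions given by everywhere absolutely convergent vector valued Dirichlet series, and let p ≥ 0, q ≥ 0, m ≥ 0 be integers. Assume 0 < λ_h^{(m,q)}(f) ≤ ρ_h^{(m,q)}(f) < +∞. Then: (i) λ_g^{(p,q)}(f) = +∞ when ρ_h^{(m,p)}(g) = 0; (ii) ρ_g^{(p,q)}(f) = +∞ when λ_h^{(m,p)}(g) = 0; (iii) λ_g^{(p,q)}(f) = 0 when ρ_h^{(m,p)}(g) = +∞; and (iv) ρ_g^{(p,q)}(f) = 0 when λ_h^{(m,p)}(g) = +∞. -/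

import Mathlib

open Filter Topology

noncomputable section

/-- An entire function given by an everywhere absolutely convergent
vector valued Dirichlet series, with coefficients in a Banach space `E`. -/
structure VVDS (E : Type*) [NormedAddCommGroup E] [NormedSpace ℂ E] [CompleteSpace E] where
  a : ℕ → E
  lam : ℕ → ℝ
  lam_pos : ∀ n, 0 < lam n
  lam_strictMono : StrictMono lam
  lam_tendsto : Tendsto lam atTop atTop
  log_index_bound : ∃ D : ℝ, ∀ᶠ n : ℕ in atTop, Real.log (n : ℝ) / lam n ≤ D
  coeff_decay : Tendsto (fun n => Real.log ‖a n‖ / lam n) atTop atBot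
  abs_conv : ∀ s : ℂ, Summable (fun n => Real.exp (s.re * lam n) * ‖a n‖)

variable {E F G : Type*} [NormedAddCommGroup E] [NormedSpace ℂ E] [CompleteSpace E]
  [NormedAddCommGroup F] [NormedSpace ℂ F] [CompleteSpace F]
  [NormedAddCommGroup G] [NormedSpace ℂ G] [CompleteSpace G]

/-- The entire function defined by the vector valued Dirichlet series. -/
def VVDS.toFun (f : VVDS E) (s : ℂ) : E := ∑' n, Complex.exp (s * (f.lam n : ℂ)) • f.a n

/-- The maximum modulus function `M_f(σ) = sup_t ‖f(σ+it)‖`. -/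
def VVDS.M (f : VVDS E) (σ : ℝ) : ℝ := ⨆ t : ℝ, ‖f.toFun ((σ : ℂ) + (t : ℂ) * Complex.I)‖

/-- The inverse function of the maximum modulus function. -/
def VVDS.Minv (f : VVDS E) (y : ℝ) : ℝ := sInf {σ : ℝ | y ≤ f.M σ}

/-- The (p,q)-th relative Ritt order of `f` with respect to `g`. -/
def relRittOrder (p q : ℕ) (f : VVDS E) (g : VVDS F) : EReal :=
  limsup (fun σ : ℝ =>
    ((Real.log^[p] (g.Minv (f.M σ)) / Real.log^[q] σ : ℝ) : EReal)) atTop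

/-- The (p,q)-th relative Ritt lower order of `f` with respect to `g`. -/
def relRittLowerOrder (p q : ℕ) (f : VVDS E) (g : VVDS F) : EReal :=
  liminf (fun σ : ℝ =>
    ((Real.log^[p] (g.Minv (f.M σ)) / Real.log^[q] σ : ℝ) : EReal)) atTop

/-- The (p,q)-th relative Ritt type of `f` with respect to `g`. -/
def relRittType (p q : ℕ) (f : VVDS E) (g : VVDS F) : EReal :=
  limsup (fun σ : ℝ =>
    ((Real.log^[p-1] (g.Minv (f.M σ)) /
      (Real.log^[q-1] σ) ^ (relRittOrder p q f g).toReal : ℝ) : EReal)) atTop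

/-- The (p,q)-th relative Ritt lower type of `f` with respect to `g`. -/
def relRittLowerType (p q : ℕ) (f : VVDS E) (g : VVDS F) : EReal :=
  liminf (fun σ : ℝ =>
    ((Real.log^[p-1] (g.Minv (f.M σ)) /
      (Real.log^[q-1] σ) ^ (relRittOrder p q f g).toReal : ℝ) : EReal)) atTop

/-- The (p,q)-th relative Ritt weak type of `f` with respect to `g`. -/
def relRittWeakType (p q : ℕ) (f : VVDS E) (g : VVDS F) : EReal :=
  liminf (fun σ : ℝ =>
    ((Real.log^[p-1] (g.Minv (f.M σ)) /
      (Real.log^[q-1] σ) ^ (relRittLowerOrder p q f g).toReal : ℝ) : EReal)) atTop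

/-- The growth indicator `τ̄_g^{(p,q)}(f)`. -/
def relRittUpperWeakType (p q : ℕ) (f : VVDS E) (g : VVDS F) : EReal :=
  limsup (fun σ : ℝ =>
    ((Real.log^[p-1] (g.Minv (f.M σ)) /
      (Real.log^[q-1] σ) ^ (relRittLowerOrder p q f g).toReal : ℝ) : EReal)) atTop

namespace VVDS

variable (f : VVDS E)

/-- The majorant sum. -/
def S (b : ℝ) : ℝ := ∑' n, Real.exp (b * f.lam n) * ‖f.a n‖

lemma summable_S (b : ℝ) : Summable (fun n => Real.exp (b * f.lam n) * ‖f.a n‖) := by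
  simpa using f.abs_conv (b : ℂ)

lemma norm_term (s : ℂ) (n : ℕ) :
    ‖Complex.exp (s * (f.lam n : ℂ)) • f.a n‖ = Real.exp (s.re * f.lam n) * ‖f.a n‖ := by
  rw [norm_smul, Complex.norm_exp]
  congr 2
  simp [Complex.mul_re]

lemma summable_term (s : ℂ) :
    Summable (fun n => Complex.exp (s * (f.lam n : ℂ)) • f.a n) := by
  apply Summable.of_norm
  simpa only [f.norm_term] using f.summable_S s.re

lemma S_nonneg (b : ℝ) : 0 ≤ f.S b :=
  tsum_nonneg fun n => mul_nonneg (Real.exp_pos _).le (norm_nonneg _)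

lemma S_mono {b b' : ℝ} (hb : b ≤ b') : f.S b ≤ f.S b' := by
  refine Summable.tsum_le_tsum (fun n => ?_) (f.summable_S b) (f.summable_S b')
  exact mul_le_mul_of_nonneg_right
    (Real.exp_le_exp.2 (mul_le_mul_of_nonneg_right hb (f.lam_pos n).le)) (norm_nonneg _)

lemma S_le {b : ℝ} (hb : b ≤ 0) : f.S b ≤ Real.exp (b * f.lam 0) * f.S 0 := by
  have h0 : f.S 0 = ∑' n, ‖f.a n‖ := by
    unfold S; congr 1; ext n; simp
  rw [h0]
  have hsum0 : Summable (fun n => ‖f.a n‖) := by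
    have := f.summable_S 0; simpa using this
  calc f.S b ≤ ∑' n, Real.exp (b * f.lam 0) * ‖f.a n‖ := by
        refine Summable.tsum_le_tsum (fun n => ?_) (f.summable_S b) (hsum0.mul_left _)
        refine mul_le_mul_of_nonneg_right (Real.exp_le_exp.2 ?_) (norm_nonneg _)
        have h1 : f.lam 0 ≤ f.lam n := (f.lam_strictMono.monotone (Nat.zero_le n))
        nlinarith
    _ = Real.exp (b * f.lam 0) * ∑' n, ‖f.a n‖ := tsum_mul_left

lemma exists_S_small {ε : ℝ} (hε : 0 < ε) : ∃ C : ℝ, ∀ b ≤ C, f.S b < ε := by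
  have h1 : Filter.Tendsto (fun b : ℝ => Real.exp (b * f.lam 0) * f.S 0) atBot (nhds 0) := by
    have h2 : Filter.Tendsto (fun b : ℝ => b * f.lam 0) atBot atBot :=
      Filter.tendsto_id.atBot_mul_const (f.lam_pos 0)
    have h3 := (Real.tendsto_exp_atBot.comp h2).mul_const (f.S 0)
    simpa using h3
  have h4 : ∀ᶠ b in atBot, Real.exp (b * f.lam 0) * f.S 0 < ε :=
    h1.eventually_lt_const hε
  obtain ⟨C, hC⟩ := Filter.eventually_atBot.1 h4
  refine ⟨min C 0, fun b hbC => ?_⟩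
  exact lt_of_le_of_lt (f.S_le (hbC.trans (min_le_right _ _)))
    (hC b (hbC.trans (min_le_left _ _)))

lemma norm_toFun_le (s : ℂ) : ‖f.toFun s‖ ≤ f.S s.re := by
  refine tsum_of_norm_bounded (f.summable_S s.re).hasSum (fun n => ?_)
  rw [f.norm_term]

lemma differentiable : Differentiable ℂ f.toFun := by
  intro z₀
  set b : ℝ := z₀.re + 1 with hb
  have hU : IsOpen {z : ℂ | z.re < b} := isOpen_lt Complex.continuous_re continuous_const
  have key : TendstoUniformlyOn
      (fun (N : Finset ℕ) z => ∑ n ∈ N, Complex.exp (z * (f.lam n : ℂ)) • f.a n)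
      (fun z => ∑' n, Complex.exp (z * (f.lam n : ℂ)) • f.a n) atTop {z : ℂ | z.re < b} := by
    refine tendstoUniformlyOn_tsum (f.summable_S b) (fun n z hz => ?_)
    rw [f.norm_term]
    exact mul_le_mul_of_nonneg_right
      (Real.exp_le_exp.2 (mul_le_mul_of_nonneg_right (le_of_lt hz) (f.lam_pos n).le))
      (norm_nonneg _)
  have hdiff : DifferentiableOn ℂ f.toFun {z : ℂ | z.re < b} := by
    refine key.tendstoLocallyUniformlyOn.differentiableOn
      (Filter.Eventually.of_forall (fun N => Differentiable.differentiableOn ?_)) hU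
    refine Differentiable.fun_sum (fun n _ => ?_)
    exact (Complex.differentiable_exp.comp
      (differentiable_id.mul_const ((f.lam n : ℂ)))).smul_const (f.a n)
  exact hdiff.differentiableAt (hU.mem_nhds (by simp only [Set.mem_setOf_eq, hb]; linarith))

lemma continuous : Continuous f.toFun := f.differentiable.continuous

lemma bddAbove_range_M (σ : ℝ) :
    BddAbove (Set.range fun t : ℝ => ‖f.toFun ((σ : ℂ) + (t : ℂ) * Complex.I)‖) := by
  refine ⟨f.S σ, ?_⟩
  rintro y ⟨t, rfl⟩
  have := f.norm_toFun_le ((σ : ℂ) + (t : ℂ) * Complex.I)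
  simpa using this

lemma norm_le_M (s : ℂ) : ‖f.toFun s‖ ≤ f.M s.re := by
  have h : (↑s.re : ℂ) + (s.im : ℂ) * Complex.I = s := Complex.re_add_im s
  have := le_ciSup (f.bddAbove_range_M s.re) s.im
  rw [h] at this
  exact this

lemma M_le_S (σ : ℝ) : f.M σ ≤ f.S σ := by
  refine ciSup_le (fun t => ?_)
  have := f.norm_toFun_le ((σ : ℂ) + (t : ℂ) * Complex.I)
  simpa using this

lemma M_nonneg (σ : ℝ) : 0 ≤ f.M σ :=
  (norm_nonneg _).trans (f.norm_le_M (σ : ℂ) |>.trans_eq (by simp))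

end VVDS
namespace VVDS

open Complex.HadamardThreeLines in
lemma M_le_interp (f : VVDS E) {σ1 σ2 σ : ℝ} (h12 : σ1 < σ2) (hσ : σ ∈ Set.Icc σ1 σ2) :
    f.M σ ≤ f.M σ1 ^ ((σ2 - σ)/(σ2 - σ1)) * f.M σ2 ^ ((σ - σ1)/(σ2 - σ1)) := by
  set L : ℝ := σ2 - σ1 with hLdef
  have hL0 : (0:ℝ) < L := by simp only [hLdef]; linarith
  set g : ℂ → E := fun z => f.toFun ((σ1 : ℂ) + z * (L : ℂ)) with hg
  have hre : ∀ z : ℂ, ((σ1 : ℂ) + z * (L : ℂ)).re = σ1 + z.re * L := by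
    intro z; simp [Complex.add_re, Complex.mul_re]
  have hd : DiffContOnCl ℂ g (verticalStrip 0 1) :=
    (f.differentiable.comp ((differentiable_const _).add
      (differentiable_id.mul_const _))).diffContOnCl
  have hB : BddAbove ((norm ∘ g) '' verticalClosedStrip 0 1) := by
    refine ⟨f.S σ2, ?_⟩
    rintro y ⟨z, hz, rfl⟩
    calc ‖g z‖ ≤ f.S (((σ1 : ℂ) + z * (L : ℂ)).re) := f.norm_toFun_le _
      _ ≤ f.S σ2 := by
          rw [hre]
          refine f.S_mono ?_
          have h1 : z.re ≤ 1 := hz.2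
          nlinarith
  have ha : ∀ z ∈ Complex.re ⁻¹' {0}, ‖g z‖ ≤ f.M σ1 := by
    intro z hz
    have h0 : z.re = 0 := hz
    have := f.norm_le_M ((σ1 : ℂ) + z * (L : ℂ))
    rwa [hre, h0, zero_mul, add_zero] at this
  have hb : ∀ z ∈ Complex.re ⁻¹' {1}, ‖g z‖ ≤ f.M σ2 := by
    intro z hz
    have h0 : z.re = 1 := hz
    have := f.norm_le_M ((σ1 : ℂ) + z * (L : ℂ))
    have h2 : σ1 + 1 * L = σ2 := by simp [hLdef]
    rwa [hre, h0, h2] at this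
  set u : ℝ := (σ - σ1)/L with hu
  have hu0 : 0 ≤ u := div_nonneg (by linarith [hσ.1]) hL0.le
  have hu1 : u ≤ 1 := by
    rw [hu, div_le_one hL0]; simp only [hLdef]; linarith [hσ.2]
  refine ciSup_le (fun t => ?_)
  set z : ℂ := (u : ℂ) + ((t/L : ℝ) : ℂ) * Complex.I with hz
  have hzre : z.re = u := by simp [hz]
  have hzmem : z ∈ verticalClosedStrip 0 1 := by
    simp only [verticalClosedStrip, Set.mem_preimage, hzre, Set.mem_Icc]
    exact ⟨hu0, hu1⟩
  have key := norm_le_interp_of_mem_verticalClosedStrip' (f := g) zero_lt_one hzmem hd hB ha hb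
  have hLne : (L : ℂ) ≠ 0 := by exact_mod_cast hL0.ne'
  have harg : (σ1 : ℂ) + z * (L : ℂ) = (σ : ℂ) + (t : ℂ) * Complex.I := by
    rw [hz, hu]
    push_cast
    field_simp
    ring
  have hgz : g z = f.toFun ((σ : ℂ) + (t : ℂ) * Complex.I) := by rw [hg]; simp only; rw [harg]
  rw [hgz] at key
  rw [hzre] at key
  have h1u : 1 - u = (σ2 - σ)/L := by
    rw [hu]; field_simp; rw [hLdef]; ring
  simp only [sub_zero, div_one] at key
  rw [h1u, hu] at key
  exact key

end VVDS
namespace VVDS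

lemma exists_gap (f : VVDS E) (k : ℕ) :
    ∃ δ : ℝ, 0 < δ ∧ ∀ n : ℕ, n ≠ k → δ ≤ |f.lam n - f.lam k| := by
  rcases k with _ | j
  · refine ⟨f.lam 1 - f.lam 0, by linarith [f.lam_strictMono (show 0 < 1 by norm_num)], ?_⟩
    intro n hn
    have h1 : 1 ≤ n := Nat.one_le_iff_ne_zero.2 hn
    have h2 : f.lam 1 ≤ f.lam n := f.lam_strictMono.monotone h1
    have h0 : f.lam 0 < f.lam 1 := f.lam_strictMono (by norm_num)
    rw [abs_of_pos (by linarith)]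
    linarith
  · refine ⟨min (f.lam (j+2) - f.lam (j+1)) (f.lam (j+1) - f.lam j), ?_, ?_⟩
    · have h1 := f.lam_strictMono (Nat.lt_succ_self (j+1))
      have h2 := f.lam_strictMono (Nat.lt_succ_self j)
      exact lt_min (by linarith) (by linarith)
    · intro n hn
      rcases lt_or_gt_of_ne hn with hlt | hgt
      · have h2 : f.lam n ≤ f.lam j := f.lam_strictMono.monotone (Nat.lt_succ_iff.1 hlt)
        have h3 : f.lam n < f.lam (j+1) := f.lam_strictMono hlt
        rw [abs_of_neg (by linarith)]
        have := min_le_right (f.lam (j+2) - f.lam (j+1)) (f.lam (j+1) - f.lam j)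
        linarith
      · have h2 : f.lam (j+2) ≤ f.lam n := f.lam_strictMono.monotone hgt
        have h3 : f.lam (j+1) < f.lam (j+2) := f.lam_strictMono (Nat.lt_succ_self _)
        rw [abs_of_pos (by linarith)]
        have := min_le_left (f.lam (j+2) - f.lam (j+1)) (f.lam (j+1) - f.lam j)
        linarith

lemma coeff_le_M (f : VVDS E) (σ : ℝ) (k : ℕ) :
    ‖f.a k‖ * Real.exp (σ * f.lam k) ≤ f.M σ := by
  obtain ⟨δ, hδ0, hδ⟩ := f.exists_gap k
  set R : ℝ := (2/δ) * f.S σ with hRdef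
  have hR0 : 0 ≤ R := mul_nonneg (by positivity) (f.S_nonneg σ)
  have key : ∀ T : ℝ, 0 < T →
      Real.exp (σ * f.lam k) * ‖f.a k‖ ≤ f.M σ + R / (2*T) := by
    intro T hT
    set z : ℕ → ℝ → ℂ := fun n t =>
      Complex.exp (((σ * f.lam n : ℝ) : ℂ) + ((t * (f.lam n - f.lam k) : ℝ) : ℂ) * Complex.I)
      with hzdef
    set G : ℕ → ℝ → E := fun n t => z n t • f.a n with hGdef
    have hznorm : ∀ n t, ‖z n t‖ = Real.exp (σ * f.lam n) := by
      intro n t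
      rw [Complex.norm_exp]
      congr 1
      simp
    have hGnorm : ∀ n t, ‖G n t‖ = Real.exp (σ * f.lam n) * ‖f.a n‖ := by
      intro n t
      rw [hGdef]; simp only [norm_smul, hznorm]
    have hzcont : ∀ n, Continuous (z n) := by
      intro n
      apply Complex.continuous_exp.comp
      continuity
    have hGcont : ∀ n, Continuous (G n) := fun n => (hzcont n).smul continuous_const
    -- pointwise identity
    have hpt : ∀ t : ℝ,
        Complex.exp (-(((t * f.lam k : ℝ)) : ℂ) * Complex.I) •
          f.toFun ((σ:ℂ) + (t:ℂ)*Complex.I) = ∑' n, G n t := by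
      intro t
      rw [VVDS.toFun, ← Summable.tsum_const_smul _ (f.summable_term _)]
      congr 1
      ext n
      rw [hGdef]; simp only [hzdef]
      rw [smul_smul, ← Complex.exp_add]
      congr 1
      push_cast
      ring
    -- norm bound on the full integral
    have hInorm : ‖∫ t in (-T)..T, (∑' n, G n t)‖ ≤ f.M σ * (2*T) := by
      have := intervalIntegral.norm_integral_le_of_norm_le_const (C := f.M σ)
        (f := fun t => ∑' n, G n t) (a := -T) (b := T) ?_
      · calc ‖∫ t in (-T)..T, (∑' n, G n t)‖ ≤ f.M σ * |T - (-T)| := this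
          _ = f.M σ * (2*T) := by rw [abs_of_pos (by linarith)]; ring_nf
      · intro t _
        show ‖∑' n, G n t‖ ≤ f.M σ
        rw [← hpt t, norm_smul]
        have h1 : ‖Complex.exp (-(((t * f.lam k : ℝ)) : ℂ) * Complex.I)‖ = 1 := by
          rw [Complex.norm_exp]
          simp
        rw [h1, one_mul]
        have := f.norm_le_M ((σ:ℂ) + (t:ℂ)*Complex.I)
        simpa using this
    -- swap tsum and integral
    have hint : ∀ n, IntervalIntegrable (G n) MeasureTheory.volume (-T) T :=
      fun n => (hGcont n).intervalIntegrable _ _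
    have hswap : ∫ t in (-T)..T, (∑' n, G n t) = ∑' n, ∫ t in (-T)..T, G n t := by
      have hle : (-T) ≤ T := by linarith
      rw [intervalIntegral.integral_of_le hle]
      have heq : ∀ n, (∫ t in (-T)..T, G n t) = ∫ t in Set.Ioc (-T) T, G n t :=
        fun n => intervalIntegral.integral_of_le hle
      simp only [heq]
      refine (MeasureTheory.integral_tsum_of_summable_integral_norm ?_ ?_).symm
      · exact fun n => (hGcont n).integrableOn_Ioc
      · have hnorm : (fun n => ∫ t in Set.Ioc (-T) T, ‖G n t‖) =
            fun n => (2*T) * (Real.exp (σ * f.lam n) * ‖f.a n‖) := by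
          funext n
          simp only [hGnorm]
          rw [MeasureTheory.setIntegral_const, Real.volume_real_Ioc_of_le hle, smul_eq_mul]
          ring
        rw [hnorm]
        exact (f.summable_S σ).mul_left _
    -- value of the k-th integral
    have hk : (∫ t in (-T)..T, G k t) = ((2*T) • Complex.exp ((σ * f.lam k : ℝ) : ℂ)) • f.a k := by
      have hconst : ∀ t : ℝ, G k t = Complex.exp ((σ * f.lam k : ℝ) : ℂ) • f.a k := by
        intro t
        rw [hGdef]; simp only [hzdef]
        congr 2
        simp
      simp only [hconst]
      rw [intervalIntegral.integral_const, ← smul_assoc]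
      congr 1
      have : T - -T = 2*T := by ring
      rw [this]
    -- norm bounds on the other integrals
    have hother : ∀ n, n ≠ k → ‖∫ t in (-T)..T, G n t‖ ≤ (2/δ) * (Real.exp (σ * f.lam n) * ‖f.a n‖) := by
      intro n hn
      set c : ℂ := ((f.lam n - f.lam k : ℝ) : ℂ) * Complex.I with hcdef
      have hc0 : c ≠ 0 := by
        have h1 := hδ n hn
        rw [hcdef]
        refine mul_ne_zero ?_ Complex.I_ne_zero
        simp only [ne_eq, Complex.ofReal_eq_zero]
        intro hcc
        rw [hcc] at h1
        simp only [abs_zero] at h1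
        linarith
      have hzc : ∀ t : ℝ, z n t = Complex.exp ((σ * f.lam n : ℝ) : ℂ) * Complex.exp (c * (t:ℝ)) := by
        intro t
        rw [hzdef]; simp only [hcdef]
        rw [← Complex.exp_add]
        congr 1
        push_cast
        ring
      have hGsplit : (∫ t in (-T)..T, G n t) =
          ((Complex.exp ((σ * f.lam n : ℝ) : ℂ) * ∫ t in (-T)..T, Complex.exp (c * (t:ℝ)))) • f.a n := by
        have : (fun t : ℝ => G n t) = fun t : ℝ =>
            (Complex.exp ((σ * f.lam n : ℝ) : ℂ) * Complex.exp (c * (t:ℝ))) • f.a n := by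
          funext t; rw [hGdef]; simp only [← hzc t]
        rw [this, intervalIntegral.integral_smul_const, intervalIntegral.integral_const_mul]
      rw [hGsplit]
      rw [integral_exp_mul_complex hc0]
      have hnorm1 : ∀ u : ℝ, ‖Complex.exp (c * (u : ℂ))‖ = 1 := by
        intro u
        rw [Complex.norm_exp, hcdef]
        have : (((f.lam n - f.lam k : ℝ)) * Complex.I * (u:ℂ)).re = 0 := by
          simp [Complex.mul_re]
        rw [this, Real.exp_zero]
      have hcnorm : ‖c‖ = |f.lam n - f.lam k| := by
        rw [hcdef, norm_mul, Complex.norm_I, mul_one, Complex.norm_real, Real.norm_eq_abs]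
      have hexp : ‖Complex.exp ((σ * f.lam n : ℝ) : ℂ)‖ = Real.exp (σ * f.lam n) := by
        rw [Complex.norm_exp]
        simp
      rw [norm_smul, norm_mul, norm_div, hexp]
      have hdiff : ‖Complex.exp (c * (T:ℝ)) - Complex.exp (c * ((-T : ℝ) : ℂ))‖ ≤ 2 := by
        refine le_trans (norm_sub_le _ _) ?_
        rw [hnorm1 T]
        have := hnorm1 (-T)
        push_cast at this ⊢
        rw [this]
        norm_num
      have hcge : δ ≤ ‖c‖ := by rw [hcnorm]; exact hδ n hn
      have hmid : ‖Complex.exp (c * (T:ℝ)) - Complex.exp (c * ((-T : ℝ) : ℂ))‖ / ‖c‖ ≤ 2/δ := by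
        apply div_le_div₀ (by norm_num) ?_ hδ0 hcge
        · push_cast at hdiff ⊢
          exact hdiff
      have he := Real.exp_pos (σ * f.lam n)
      have hna := norm_nonneg (f.a n)
      have hq : (0:ℝ) ≤ ‖Complex.exp (c * (T:ℝ)) - Complex.exp (c * ((-T : ℝ) : ℂ))‖ / ‖c‖ :=
        div_nonneg (norm_nonneg _) (norm_nonneg _)
      have hgoal := mul_le_mul_of_nonneg_right (mul_le_mul_of_nonneg_left hmid he.le) hna
      push_cast at hgoal ⊢
      nlinarith [hgoal]
    -- summability of the integrals
    have hexpnorm : ∀ x : ℝ, ‖Complex.exp ((x : ℝ) : ℂ)‖ = Real.exp x := by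
      intro x
      rw [Complex.norm_exp]
      simp
    have hsumI : Summable (fun n => ∫ t in (-T)..T, G n t) := by
      refine Summable.of_norm_bounded (g := fun n => (2*T) * (Real.exp (σ * f.lam n) * ‖f.a n‖))
        ((f.summable_S σ).mul_left _) (fun n => ?_)
      have h1 := intervalIntegral.norm_integral_le_of_norm_le_const
        (C := Real.exp (σ * f.lam n) * ‖f.a n‖) (f := G n) (a := -T) (b := T)
        (fun t _ => le_of_eq (hGnorm n t))
      calc ‖∫ t in (-T)..T, G n t‖ ≤ (Real.exp (σ * f.lam n) * ‖f.a n‖) * |T - (-T)| := h1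
        _ = (2*T) * (Real.exp (σ * f.lam n) * ‖f.a n‖) := by
            rw [abs_of_pos (by linarith)]; ring
    have hsplit := Summable.tsum_eq_add_tsum_ite hsumI k
    have hknorm : ‖∫ t in (-T)..T, G k t‖ = (2*T) * (Real.exp (σ * f.lam k) * ‖f.a k‖) := by
      rw [hk, norm_smul, norm_smul, hexpnorm, Real.norm_eq_abs, abs_of_pos (by linarith)]
      ring
    have hrem : ‖∑' n, if n = k then 0 else (∫ t in (-T)..T, G n t)‖ ≤ R := by
      rw [hRdef]
      have hhs : HasSum (fun n => (2/δ) * (Real.exp (σ * f.lam n) * ‖f.a n‖)) ((2/δ) * f.S σ) :=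
        (f.summable_S σ).hasSum.mul_left _
      refine tsum_of_norm_bounded hhs (fun n => ?_)
      by_cases hnk : n = k
      · simp only [if_pos hnk, norm_zero]
        positivity
      · simp only [if_neg hnk]
        exact hother n hnk
    have heq2 : (2*T) * (Real.exp (σ * f.lam k) * ‖f.a k‖) ≤ f.M σ * (2*T) + R := by
      have h1 : (∫ t in (-T)..T, G k t)
          = (∫ t in (-T)..T, (∑' n, G n t)) - ∑' n, (if n = k then 0 else (∫ t in (-T)..T, G n t)) := by
        rw [hswap, hsplit]
        abel
      calc (2*T) * (Real.exp (σ * f.lam k) * ‖f.a k‖) = ‖∫ t in (-T)..T, G k t‖ := hknorm.symm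
        _ ≤ ‖∫ t in (-T)..T, (∑' n, G n t)‖ + ‖∑' n, (if n = k then 0 else (∫ t in (-T)..T, G n t))‖ := by
            rw [h1]; exact norm_sub_le _ _
        _ ≤ f.M σ * (2*T) + R := add_le_add hInorm hrem
    have h2T : (0:ℝ) < 2*T := by linarith
    have h4 : Real.exp (σ * f.lam k) * ‖f.a k‖
        = ((2*T) * (Real.exp (σ * f.lam k) * ‖f.a k‖))/(2*T) := by field_simp
    rw [h4, div_le_iff₀ h2T]
    refine le_trans heq2 (le_of_eq ?_)
    field_simp
  rw [mul_comm]
  refine le_of_forall_pos_le_add (fun ε hε => ?_)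
  set T : ℝ := max 1 (R/(2*ε)) with hTdef
  have hT0 : (0:ℝ) < T := lt_of_lt_of_le one_pos (le_max_left _ _)
  have h5 := key T hT0
  have h6 : R/(2*T) ≤ ε := by
    rw [div_le_iff₀ (by positivity)]
    have hTge : R/(2*ε) ≤ T := le_max_right _ _
    rw [div_le_iff₀ (by positivity)] at hTge
    nlinarith
  linarith

end VVDS
namespace VVDS

variable (f : VVDS E)

lemma exists_coeff_ne_zero : ∃ k, f.a k ≠ 0 := by
  have h1 : ∀ᶠ n in atTop, Real.log ‖f.a n‖ / f.lam n ≤ -1 :=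
    f.coeff_decay.eventually (eventually_le_atBot (-1))
  obtain ⟨n, hn⟩ := h1.exists
  refine ⟨n, fun h0 => ?_⟩
  rw [h0] at hn
  simp only [norm_zero, Real.log_zero, zero_div] at hn
  linarith

lemma M_pos (σ : ℝ) : 0 < f.M σ := by
  obtain ⟨k, hk⟩ := f.exists_coeff_ne_zero
  have h1 := f.coeff_le_M σ k
  have h2 : 0 < ‖f.a k‖ := norm_pos_iff.2 hk
  nlinarith [Real.exp_pos (σ * f.lam k)]

lemma M_tendsto : Tendsto f.M atTop atTop := by
  obtain ⟨k, hk⟩ := f.exists_coeff_ne_zero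
  have h2 : 0 < ‖f.a k‖ := norm_pos_iff.2 hk
  refine tendsto_atTop_mono (fun σ => f.coeff_le_M σ k) ?_
  have h3 : Tendsto (fun σ : ℝ => σ * f.lam k) atTop atTop :=
    Filter.tendsto_id.atTop_mul_const (f.lam_pos k)
  have h4 := Real.tendsto_exp_atTop.comp h3
  exact h4.const_mul_atTop h2

lemma exists_M_lt {ε : ℝ} (hε : 0 < ε) (σ1 : ℝ) : ∃ σ0 < σ1, f.M σ0 < ε := by
  obtain ⟨C, hC⟩ := f.exists_S_small hε
  refine ⟨min C (σ1 - 1), lt_of_le_of_lt (min_le_right _ _) (by linarith), ?_⟩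
  exact lt_of_le_of_lt (f.M_le_S _) (hC _ (min_le_left _ _))

lemma M_monotone : Monotone f.M := by
  intro σ1 σ2 h
  rcases eq_or_lt_of_le h with rfl | hlt
  · exact le_refl _
  obtain ⟨σ0, hσ0, hσ0M⟩ := f.exists_M_lt (f.M_pos σ2) σ1
  have hin : σ1 ∈ Set.Icc σ0 σ2 := ⟨hσ0.le, hlt.le⟩
  have key := f.M_le_interp (lt_trans hσ0 hlt) hin
  set θ : ℝ := (σ2 - σ1)/(σ2 - σ0) with hθ
  set θ' : ℝ := (σ1 - σ0)/(σ2 - σ0) with hθ'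
  have hθ0 : 0 ≤ θ := div_nonneg (by linarith) (by linarith)
  have hθ'0 : 0 ≤ θ' := div_nonneg (by linarith) (by linarith)
  have hsum : θ + θ' = 1 := by
    rw [hθ, hθ', ← add_div,
      show σ2 - σ1 + (σ1 - σ0) = σ2 - σ0 by ring]
    have hpos : (0:ℝ) < σ2 - σ0 := by linarith
    exact div_self hpos.ne'
  calc f.M σ1 ≤ f.M σ0 ^ θ * f.M σ2 ^ θ' := key
    _ ≤ f.M σ2 ^ θ * f.M σ2 ^ θ' := by
        refine mul_le_mul_of_nonneg_right ?_ (Real.rpow_nonneg (f.M_pos σ2).le _)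
        exact Real.rpow_le_rpow (f.M_nonneg σ0) (le_of_lt hσ0M) hθ0
    _ = f.M σ2 := by
        rw [← Real.rpow_add (f.M_pos σ2), hsum, Real.rpow_one]

lemma M_strictMono : StrictMono f.M := by
  intro σ1 σ2 hlt
  rcases lt_or_ge (f.M σ1) (f.M σ2) with h | h
  · exact h
  exfalso
  have heq : f.M σ1 = f.M σ2 := le_antisymm (f.M_monotone hlt.le) h
  obtain ⟨σ0, hσ0, hσ0M⟩ := f.exists_M_lt (f.M_pos σ1) σ1
  have hin : σ1 ∈ Set.Icc σ0 σ2 := ⟨hσ0.le, hlt.le⟩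
  have key := f.M_le_interp (lt_trans hσ0 hlt) hin
  set θ : ℝ := (σ2 - σ1)/(σ2 - σ0) with hθ
  set θ' : ℝ := (σ1 - σ0)/(σ2 - σ0) with hθ'
  have hθpos : 0 < θ := div_pos (by linarith) (by linarith)
  have hθ'0 : 0 ≤ θ' := div_nonneg (by linarith) (by linarith)
  have hsum : θ + θ' = 1 := by
    rw [hθ, hθ', ← add_div,
      show σ2 - σ1 + (σ1 - σ0) = σ2 - σ0 by ring]
    have hpos : (0:ℝ) < σ2 - σ0 := by linarith
    exact div_self hpos.ne'
  have h1 : f.M σ0 ^ θ < f.M σ1 ^ θ := by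
    rw [heq] at hσ0M ⊢
    exact Real.rpow_lt_rpow (f.M_nonneg σ0) hσ0M hθpos
  have h2 : f.M σ0 ^ θ * f.M σ2 ^ θ' < f.M σ1 ^ θ * f.M σ2 ^ θ' := by
    exact mul_lt_mul_of_pos_right h1 (Real.rpow_pos_of_pos (f.M_pos σ2) _)
  rw [heq] at h2
  rw [← Real.rpow_add (f.M_pos σ2), hsum, Real.rpow_one] at h2
  have := lt_of_le_of_lt key h2
  rw [heq] at this
  exact lt_irrefl _ this

lemma log_M_interp {x y a b : ℝ} (hxy : x < y) (ha : 0 ≤ a) (hb : 0 ≤ b) (hab : a + b = 1) :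
    Real.log (f.M (a*x + b*y)) ≤ a * Real.log (f.M x) + b * Real.log (f.M y) := by
  rcases eq_or_lt_of_le ha with rfl | ha'
  · have hb1 : b = 1 := by linarith
    subst hb1
    simp
  rcases eq_or_lt_of_le hb with rfl | hb'
  · have ha1 : a = 1 := by linarith
    subst ha1
    simp
  have hyx : (0:ℝ) < y - x := by linarith
  have e1 : a*x + b*y - x = b*(y-x) := by linear_combination x * hab
  have e2 : y - (a*x + b*y) = a*(y-x) := by linear_combination (-y) * hab
  have hmem : a*x + b*y ∈ Set.Icc x y := by
    constructor
    · have := mul_nonneg hb'.le hyx.le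
      linarith
    · have := mul_nonneg ha'.le hyx.le
      linarith
  have key := f.M_le_interp hxy hmem
  have hea : (y - (a*x+b*y))/(y-x) = a := by
    rw [div_eq_iff hyx.ne']
    linear_combination (-y) * hab
  have heb : ((a*x+b*y) - x)/(y-x) = b := by
    rw [div_eq_iff hyx.ne']
    linear_combination x * hab
  rw [hea, heb] at key
  have hlog := Real.log_le_log (f.M_pos _) key
  rw [Real.log_mul (ne_of_gt (Real.rpow_pos_of_pos (f.M_pos x) _))
    (ne_of_gt (Real.rpow_pos_of_pos (f.M_pos y) _)),
    Real.log_rpow (f.M_pos x), Real.log_rpow (f.M_pos y)] at hlog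
  exact hlog

lemma M_convexOn : ConvexOn ℝ Set.univ (fun σ => Real.log (f.M σ)) := by
  refine ⟨convex_univ, ?_⟩
  intro x _ y _ a b ha hb hab
  simp only [smul_eq_mul]
  rcases lt_trichotomy x y with hxy | rfl | hxy
  · exact f.log_M_interp hxy ha hb hab
  · have h1 : a * x + b * x = x := by linear_combination x * hab
    rw [h1]
    have h2 : a * Real.log (f.M x) + b * Real.log (f.M x) = Real.log (f.M x) := by
      linear_combination (Real.log (f.M x)) * hab
    linarith
  · have hcomm : a*x + b*y = b*y + a*x := by ring
    rw [hcomm]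
    have := f.log_M_interp hxy hb ha (by linarith)
    linarith

lemma M_continuous : Continuous f.M := by
  have h1 : ContinuousOn (fun σ => Real.log (f.M σ)) Set.univ :=
    (f.M_convexOn).continuousOn isOpen_univ
  have h2 : Continuous (fun σ => Real.log (f.M σ)) := continuousOn_univ.1 h1
  have h3 : f.M = fun σ => Real.exp (Real.log (f.M σ)) :=
    funext fun σ => (Real.exp_log (f.M_pos σ)).symm
  rw [h3]
  exact Real.continuous_exp.comp h2

end VVDS
namespace VVDS

variable (f : VVDS E)

lemma set_nonempty (y : ℝ) : {σ : ℝ | y ≤ f.M σ}.Nonempty := by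
  obtain ⟨σ, hσ⟩ := (f.M_tendsto.eventually (eventually_ge_atTop y)).exists
  exact ⟨σ, hσ⟩

lemma set_subset_Ioi {y C : ℝ} (hy : f.S C < y) : {σ : ℝ | y ≤ f.M σ} ⊆ Set.Ioi C := by
  intro σ hσ
  simp only [Set.mem_setOf_eq] at hσ
  by_contra hC
  simp only [Set.mem_Ioi, not_lt] at hC
  have h1 : f.M σ ≤ f.S C := le_trans (f.M_le_S σ) (f.S_mono hC)
  linarith

lemma set_bddBelow {y : ℝ} (hy : f.S 0 < y) : BddBelow {σ : ℝ | y ≤ f.M σ} :=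
  ⟨0, fun σ hσ => le_of_lt (f.set_subset_Ioi hy hσ)⟩

lemma minv_ge {y C : ℝ} (hy : f.S C < y) : C ≤ f.Minv y :=
  le_csInf (f.set_nonempty y) (fun σ hσ => le_of_lt (f.set_subset_Ioi hy hσ))

lemma minv_tendsto : Tendsto f.Minv atTop atTop := by
  refine tendsto_atTop.2 (fun C => ?_)
  filter_upwards [eventually_ge_atTop (f.S C + 1)] with y hy
  exact f.minv_ge (by linarith)

lemma minv_mono {y y' : ℝ} (hy : f.S 0 < y) (h : y ≤ y') : f.Minv y ≤ f.Minv y' :=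
  csInf_le_csInf (f.set_bddBelow hy) (f.set_nonempty y')
    (fun σ hσ => le_trans h hσ)

lemma exists_near_minv {y : ℝ} (hy : f.S 0 < y) :
    ∃ τ, y ≤ f.M τ ∧ f.Minv y ≤ τ ∧ τ < f.Minv y + 1 := by
  have h1 : f.Minv y < f.Minv y + 1 := by linarith
  obtain ⟨τ, hτ1, hτ2⟩ := (csInf_lt_iff (f.set_bddBelow hy) (f.set_nonempty y)).1 h1
  exact ⟨τ, hτ1, csInf_le (f.set_bddBelow hy) hτ1, hτ2⟩

lemma minv_M (τ : ℝ) : f.Minv (f.M τ) = τ := by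
  have h1 : {σ : ℝ | f.M τ ≤ f.M σ} = Set.Ici τ := by
    ext σ
    simp [f.M_strictMono.le_iff_le]
  rw [VVDS.Minv, h1, csInf_Ici]

lemma M_lt_of_lt_minv {y τ' : ℝ} (hy : f.S 0 < y) (h : τ' < f.Minv y) : f.M τ' < y := by
  by_contra h'
  push_neg at h'
  exact absurd (csInf_le (f.set_bddBelow hy) (by simpa using h')) (not_le.2 h)

lemma M_surj {σ0 y : ℝ} (hy : f.M σ0 ≤ y) : ∃ σ, σ0 ≤ σ ∧ f.M σ = y := by
  obtain ⟨b, hb1, hb2⟩ :=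
    ((f.M_tendsto.eventually (eventually_ge_atTop y)).and (eventually_ge_atTop σ0)).exists
  have hmem : y ∈ Set.Icc (f.M σ0) (f.M b) := ⟨hy, hb1⟩
  obtain ⟨σ, hσ1, hσ2⟩ := intermediate_value_Icc hb2 (f.M_continuous.continuousOn) hmem
  exact ⟨σ, hσ1.1, hσ2⟩

end VVDS

section IterLog

/-- Iterated exponential. -/
noncomputable def expIter (k : ℕ) : ℝ := Real.exp^[k] 1

lemma expIter_succ (k : ℕ) : expIter (k+1) = Real.exp (expIter k) :=
  Function.iterate_succ_apply' _ _ _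

lemma one_le_expIter (k : ℕ) : 1 ≤ expIter k := by
  induction k with
  | zero => simp [expIter]
  | succ k ih =>
    rw [expIter_succ]
    have := Real.add_one_le_exp (expIter k)
    linarith

lemma expIter_pos (k : ℕ) : 0 < expIter k := lt_of_lt_of_le one_pos (one_le_expIter k)

lemma logIter_ge_one (k : ℕ) : ∀ {x : ℝ}, expIter k ≤ x → 1 ≤ Real.log^[k] x := by
  induction k with
  | zero => intro x hx; simpa [expIter] using hx
  | succ k ih =>
    intro x hx
    rw [Function.iterate_succ_apply]
    have hx0 : 0 < x := lt_of_lt_of_le (Real.exp_pos _) (by rw [← expIter_succ]; exact hx)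
    refine ih ((Real.le_log_iff_exp_le hx0).2 ?_)
    rw [← expIter_succ]; exact hx

lemma logIter_mono (k : ℕ) : ∀ {x y : ℝ}, expIter k ≤ x → x ≤ y → Real.log^[k] x ≤ Real.log^[k] y := by
  induction k with
  | zero => intro x y _ h; simpa using h
  | succ k ih =>
    intro x y hx hxy
    rw [Function.iterate_succ_apply, Function.iterate_succ_apply]
    have hx0 : 0 < x := lt_of_lt_of_le (Real.exp_pos _) (by rw [← expIter_succ]; exact hx)
    have h1 : expIter k ≤ Real.log x :=
      (Real.le_log_iff_exp_le hx0).2 (by rw [← expIter_succ]; exact hx)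
    exact ih h1 (Real.log_le_log hx0 hxy)

lemma logIter_tendsto (k : ℕ) : Tendsto (Real.log^[k]) atTop atTop := by
  induction k with
  | zero => simpa using tendsto_id
  | succ k ih =>
    rw [Function.iterate_succ]
    exact ih.comp Real.tendsto_log_atTop

lemma logIter_double (k : ℕ) :
    ∃ B : ℝ, expIter k ≤ B ∧ 1 ≤ B ∧ ∀ t, B ≤ t → Real.log^[k] (2*t) ≤ 2 * Real.log^[k] t := by
  induction k with
  | zero =>
    refine ⟨1, by simp [expIter], le_refl 1, fun t ht => ?_⟩
    simp only [Function.iterate_zero, id_eq]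
    linarith
  | succ k ih =>
    obtain ⟨B, hB1, hB2, hB⟩ := ih
    refine ⟨Real.exp (max B 1), ?_, ?_, ?_⟩
    · rw [expIter_succ]
      exact Real.exp_le_exp.2 (le_trans hB1 (le_max_left _ _))
    · have h0 : (0:ℝ) ≤ max B 1 := le_trans zero_le_one (le_max_right _ _)
      have := Real.add_one_le_exp (max B 1)
      linarith
    · intro t ht
      have ht0 : 0 < t := lt_of_lt_of_le (Real.exp_pos _) ht
      have hlogt : max B 1 ≤ Real.log t := (Real.le_log_iff_exp_le ht0).2 ht
      have h1t : 1 ≤ Real.log t := le_trans (le_max_right _ _) hlogt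
      have hBt : B ≤ Real.log t := le_trans (le_max_left _ _) hlogt
      rw [Function.iterate_succ_apply, Function.iterate_succ_apply]
      have h2t : Real.log (2*t) = Real.log 2 + Real.log t := Real.log_mul two_ne_zero ht0.ne'
      rw [h2t]
      have hlog2a : (0:ℝ) ≤ Real.log 2 := Real.log_nonneg one_le_two
      have hlog2b : Real.log 2 ≤ 1 := by linarith [Real.log_two_lt_d9]
      have step1 : Real.log^[k] (Real.log 2 + Real.log t) ≤ Real.log^[k] (2 * Real.log t) := by
        refine logIter_mono k ?_ ?_
        · have := hB1
          linarith
        · linarith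
      have step2 := hB (Real.log t) hBt
      linarith

end IterLog

section ERealHelpers

variable {u : ℝ → ℝ}

lemma ereal_liminf_eq_top (h : ∀ K : ℝ, ∀ᶠ σ in atTop, K ≤ u σ) :
    liminf (fun σ => ((u σ : ℝ) : EReal)) atTop = ⊤ := by
  by_contra hne
  obtain ⟨K, hK1, _⟩ := EReal.exists_between_coe_real (lt_top_iff_ne_top.2 hne)
  have h2 : (K : EReal) ≤ liminf (fun σ => ((u σ : ℝ) : EReal)) atTop := by
    calc (K : EReal) = liminf (fun _ : ℝ => (K : EReal)) atTop := (liminf_const _).symm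
      _ ≤ _ := liminf_le_liminf (by
          filter_upwards [h K] with σ hσ
          exact EReal.coe_le_coe_iff.2 hσ)
  exact absurd h2 (not_le.2 hK1)

lemma ereal_limsup_eq_top (h : ∀ K : ℝ, ∃ᶠ σ in atTop, K ≤ u σ) :
    limsup (fun σ => ((u σ : ℝ) : EReal)) atTop = ⊤ := by
  by_contra hne
  obtain ⟨K, hK1, _⟩ := EReal.exists_between_coe_real (lt_top_iff_ne_top.2 hne)
  have h2 : (K : EReal) ≤ limsup (fun σ => ((u σ : ℝ) : EReal)) atTop := by
    refine le_limsup_of_frequently_le ?_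
    exact (h K).mono (fun σ hσ => EReal.coe_le_coe_iff.2 hσ)
  exact absurd h2 (not_le.2 hK1)

lemma ereal_limsup_eq_zero (h0 : ∀ᶠ σ in atTop, 0 ≤ u σ)
    (h : ∀ δ : ℝ, 0 < δ → ∀ᶠ σ in atTop, u σ ≤ δ) :
    limsup (fun σ => ((u σ : ℝ) : EReal)) atTop = 0 := by
  refine le_antisymm ?_ ?_
  · by_contra hne
    obtain ⟨δ, hδ1, hδ2⟩ := EReal.exists_between_coe_real (not_le.1 hne)
    have hδpos : (0:ℝ) < δ := by exact_mod_cast hδ1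
    have h2 : limsup (fun σ => ((u σ : ℝ) : EReal)) atTop ≤ (δ : EReal) := by
      calc limsup (fun σ => ((u σ : ℝ) : EReal)) atTop
          ≤ limsup (fun _ : ℝ => (δ : EReal)) atTop := limsup_le_limsup (by
            filter_upwards [h δ hδpos] with σ hσ
            exact EReal.coe_le_coe_iff.2 hσ)
        _ = (δ : EReal) := limsup_const _
    exact absurd h2 (not_le.2 hδ2)
  · have h2 : ((0:ℝ) : EReal) ≤ limsup (fun σ => ((u σ : ℝ) : EReal)) atTop :=
      le_limsup_of_frequently_le (h0.frequently.mono (fun σ hσ => EReal.coe_le_coe_iff.2 hσ))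
    simpa using h2

lemma ereal_liminf_eq_zero (h0 : ∀ᶠ σ in atTop, 0 ≤ u σ)
    (h : ∀ δ : ℝ, 0 < δ → ∃ᶠ σ in atTop, u σ ≤ δ) :
    liminf (fun σ => ((u σ : ℝ) : EReal)) atTop = 0 := by
  refine le_antisymm ?_ ?_
  · by_contra hne
    obtain ⟨δ, hδ1, hδ2⟩ := EReal.exists_between_coe_real (not_le.1 hne)
    have hδpos : (0:ℝ) < δ := by exact_mod_cast hδ1
    have h2 : liminf (fun σ => ((u σ : ℝ) : EReal)) atTop ≤ (δ : EReal) :=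
      liminf_le_of_frequently_le ((h δ hδpos).mono (fun σ hσ => EReal.coe_le_coe_iff.2 hσ))
    exact absurd h2 (not_le.2 hδ2)
  · have h2 : ((0:ℝ) : EReal) ≤ liminf (fun σ => ((u σ : ℝ) : EReal)) atTop := by
      calc ((0:ℝ) : EReal) = liminf (fun _ : ℝ => ((0:ℝ) : EReal)) atTop := (liminf_const _).symm
        _ ≤ _ := liminf_le_liminf (by
            filter_upwards [h0] with σ hσ
            exact EReal.coe_le_coe_iff.2 hσ)
    simpa using h2

lemma ereal_of_pos_liminf (h : (0 : EReal) < liminf (fun σ => ((u σ : ℝ) : EReal)) atTop) :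
    ∃ c : ℝ, 0 < c ∧ ∀ᶠ σ in atTop, c < u σ := by
  obtain ⟨c, hc1, hc2⟩ := EReal.exists_between_coe_real h
  refine ⟨c, by exact_mod_cast hc1, ?_⟩
  have := eventually_lt_of_lt_liminf hc2
  exact this.mono (fun σ hσ => EReal.coe_lt_coe_iff.1 hσ)

lemma ereal_of_limsup_lt_top (h : limsup (fun σ => ((u σ : ℝ) : EReal)) atTop < ⊤) :
    ∃ C : ℝ, 0 < C ∧ ∀ᶠ σ in atTop, u σ < C := by
  obtain ⟨C0, hC1, _⟩ := EReal.exists_between_coe_real h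
  refine ⟨max C0 1, lt_of_lt_of_le one_pos (le_max_right _ _), ?_⟩
  have h2 : limsup (fun σ => ((u σ : ℝ) : EReal)) atTop < ((max C0 1 : ℝ) : EReal) :=
    lt_of_lt_of_le hC1 (EReal.coe_le_coe_iff.2 (le_max_left _ _))
  exact (eventually_lt_of_limsup_lt h2).mono (fun σ hσ => EReal.coe_lt_coe_iff.1 hσ)

lemma ereal_of_limsup_eq_zero (h : limsup (fun σ => ((u σ : ℝ) : EReal)) atTop = 0)
    {δ : ℝ} (hδ : 0 < δ) : ∀ᶠ σ in atTop, u σ < δ := by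
  have h2 : limsup (fun σ => ((u σ : ℝ) : EReal)) atTop < ((δ : ℝ) : EReal) := by
    rw [h]; exact_mod_cast hδ
  exact (eventually_lt_of_limsup_lt h2).mono (fun σ hσ => EReal.coe_lt_coe_iff.1 hσ)

lemma ereal_of_liminf_eq_zero (h : liminf (fun σ => ((u σ : ℝ) : EReal)) atTop = 0)
    {δ : ℝ} (hδ : 0 < δ) : ∃ᶠ σ in atTop, u σ < δ := by
  have h2 : liminf (fun σ => ((u σ : ℝ) : EReal)) atTop < ((δ : ℝ) : EReal) := by
    rw [h]; exact_mod_cast hδ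
  exact (frequently_lt_of_liminf_lt (by isBoundedDefault) h2).mono (fun σ hσ => EReal.coe_lt_coe_iff.1 hσ)

lemma ereal_of_liminf_eq_top (h : liminf (fun σ => ((u σ : ℝ) : EReal)) atTop = ⊤)
    (N : ℝ) : ∀ᶠ σ in atTop, N < u σ := by
  have h2 : ((N : ℝ) : EReal) < liminf (fun σ => ((u σ : ℝ) : EReal)) atTop := by
    rw [h]; exact EReal.coe_lt_top N
  exact (eventually_lt_of_lt_liminf h2).mono (fun σ hσ => EReal.coe_lt_coe_iff.1 hσ)

lemma ereal_of_limsup_eq_top (h : limsup (fun σ => ((u σ : ℝ) : EReal)) atTop = ⊤)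
    (N : ℝ) : ∃ᶠ σ in atTop, N < u σ := by
  have h2 : ((N : ℝ) : EReal) < limsup (fun σ => ((u σ : ℝ) : EReal)) atTop := by
    rw [h]; exact EReal.coe_lt_top N
  exact (frequently_lt_of_lt_limsup (by isBoundedDefault) h2).mono (fun σ hσ => EReal.coe_lt_coe_iff.1 hσ)

end ERealHelpers
section MainParts

variable (f : VVDS E) (g : VVDS F) (h : VVDS G) (p q m : ℕ)

lemma part_i (hf1 : (0 : EReal) < relRittLowerOrder m q f h)
    (h0 : relRittOrder m p g h = 0) : relRittLowerOrder p q f g = ⊤ := by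
  rw [relRittLowerOrder] at hf1
  rw [relRittOrder] at h0
  obtain ⟨c, hc0, hc⟩ := ereal_of_pos_liminf hf1
  rw [relRittLowerOrder]
  refine ereal_liminf_eq_top (fun K0 => ?_)
  set K : ℝ := max K0 1 with hKdef
  have hK1 : (1:ℝ) ≤ K := le_max_right _ _
  have hKpos : (0:ℝ) < K := by linarith
  set ε : ℝ := c / (2*K) with hεdef
  have hεpos : 0 < ε := by positivity
  have hev : ∀ᶠ τ in atTop,
      Real.log^[m] (h.Minv (g.M τ)) / Real.log^[p] τ < ε :=
    ereal_of_limsup_eq_zero h0 hεpos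
  obtain ⟨T₀, hT₀⟩ := eventually_atTop.1 hev
  obtain ⟨Bp, hBp1, hBp2, hBp⟩ := logIter_double p
  have hcomp_g : Tendsto (fun σ => g.Minv (f.M σ)) atTop atTop :=
    g.minv_tendsto.comp f.M_tendsto
  have hcomp_h : Tendsto (fun σ => h.Minv (f.M σ)) atTop atTop :=
    h.minv_tendsto.comp f.M_tendsto
  have hevσ : ∀ᶠ σ in atTop,
      (c < Real.log^[m] (h.Minv (f.M σ)) / Real.log^[q] σ) ∧
      (1 ≤ Real.log^[q] σ) ∧
      (g.S 0 < f.M σ) ∧ (h.S 0 < f.M σ) ∧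
      (max (max T₀ Bp) (max (expIter p) 1) ≤ g.Minv (f.M σ)) ∧
      (expIter m ≤ h.Minv (f.M σ)) := by
    filter_upwards [hc,
      (logIter_tendsto q).eventually (eventually_ge_atTop 1),
      f.M_tendsto.eventually (eventually_gt_atTop (g.S 0)),
      f.M_tendsto.eventually (eventually_gt_atTop (h.S 0)),
      hcomp_g.eventually (eventually_ge_atTop (max (max T₀ Bp) (max (expIter p) 1))),
      hcomp_h.eventually (eventually_ge_atTop (expIter m))] with σ h1 h2 h3 h4 h5 h6
    exact ⟨h1, h2, h3, h4, h5, h6⟩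
  filter_upwards [hevσ] with σ ⟨h1, h2, h3, h4, h5, h6⟩
  set u : ℝ := g.Minv (f.M σ) with hu
  have hLq : (0:ℝ) < Real.log^[q] σ := by linarith
  have hstep1 : c * Real.log^[q] σ < Real.log^[m] (h.Minv (f.M σ)) :=
    (lt_div_iff₀ hLq).1 h1
  obtain ⟨τ, hτ1, hτ2, hτ3⟩ := g.exists_near_minv h3
  have huT : max (max T₀ Bp) (max (expIter p) 1) ≤ u := h5
  have huT₀ : T₀ ≤ u := le_trans (le_trans (le_max_left _ _) (le_max_left _ _)) huT
  have huBp : Bp ≤ u := le_trans (le_trans (le_max_right _ _) (le_max_left _ _)) huT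
  have huEp : expIter p ≤ u := le_trans (le_trans (le_max_left _ _) (le_max_right _ _)) huT
  have hu1 : (1:ℝ) ≤ u := le_trans (le_trans (le_max_right _ _) (le_max_right _ _)) huT
  have hτEp : expIter p ≤ τ := le_trans huEp hτ2
  have hLpτ : (0:ℝ) < Real.log^[p] τ := lt_of_lt_of_le one_pos (logIter_ge_one p hτEp)
  have hτbound := hT₀ τ (le_trans huT₀ hτ2)
  have hstep2 : Real.log^[m] (h.Minv (g.M τ)) < ε * Real.log^[p] τ :=
    (div_lt_iff₀ hLpτ).1 hτbound
  have hmono1 : h.Minv (f.M σ) ≤ h.Minv (g.M τ) := h.minv_mono h4 hτ1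
  have hmono2 : Real.log^[m] (h.Minv (f.M σ)) ≤ Real.log^[m] (h.Minv (g.M τ)) :=
    logIter_mono m h6 hmono1
  have hstep3 : Real.log^[p] τ ≤ Real.log^[p] (2*u) :=
    logIter_mono p hτEp (by linarith)
  have hstep4 : Real.log^[p] (2*u) ≤ 2 * Real.log^[p] u := hBp u huBp
  -- combine : c * Lq < ε * (2 * Lp u) = (c/K) * Lp u
  have hchain : c * Real.log^[q] σ < ε * (2 * Real.log^[p] u) := by
    calc c * Real.log^[q] σ < Real.log^[m] (h.Minv (f.M σ)) := hstep1
      _ ≤ Real.log^[m] (h.Minv (g.M τ)) := hmono2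
      _ < ε * Real.log^[p] τ := hstep2
      _ ≤ ε * (2 * Real.log^[p] u) := by
          refine mul_le_mul_of_nonneg_left ?_ hεpos.le
          linarith
  have hfin : K * Real.log^[q] σ < Real.log^[p] u := by
    have hεval : ε * 2 = c / K := by rw [hεdef]; field_simp
    rw [show ε * (2 * Real.log^[p] u) = (ε * 2) * Real.log^[p] u by ring, hεval] at hchain
    have h7 : c * (K * Real.log^[q] σ) < c * Real.log^[p] u := by
      have h8 : (c / K) * Real.log^[p] u = c * Real.log^[p] u / K := by ring
      rw [h8] at hchain
      have := (lt_div_iff₀ hKpos).1 hchain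
      calc c * (K * Real.log^[q] σ) = c * Real.log^[q] σ * K := by ring
        _ < c * Real.log^[p] u := this
    exact lt_of_mul_lt_mul_left h7 hc0.le
  have : K ≤ Real.log^[p] u / Real.log^[q] σ := by
    rw [le_div_iff₀ hLq]
    linarith
  exact le_trans (le_max_left K0 1) this

lemma part_ii (hf1 : (0 : EReal) < relRittLowerOrder m q f h)
    (h0 : relRittLowerOrder m p g h = 0) : relRittOrder p q f g = ⊤ := by
  rw [relRittLowerOrder] at hf1 h0
  obtain ⟨c, hc0, hc⟩ := ereal_of_pos_liminf hf1
  obtain ⟨T₁, hT₁⟩ := eventually_atTop.1 hc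
  rw [relRittOrder]
  refine ereal_limsup_eq_top (fun K0 => ?_)
  set K : ℝ := max K0 1 with hKdef
  have hK1 : (1:ℝ) ≤ K := le_max_right _ _
  have hKpos : (0:ℝ) < K := by linarith
  set ε : ℝ := c / K with hεdef
  have hεpos : 0 < ε := by positivity
  have hfreq : ∃ᶠ τ in atTop,
      Real.log^[m] (h.Minv (g.M τ)) / Real.log^[p] τ < ε :=
    ereal_of_liminf_eq_zero h0 hεpos
  rw [Filter.frequently_atTop]
  intro b
  set σ₀ : ℝ := max (max b T₁) (max (expIter q) (expIter p)) with hσ₀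
  -- conditions on τ
  have hev : ∀ᶠ τ in atTop, (expIter p ≤ τ) ∧ (f.M σ₀ ≤ g.M τ) := by
    filter_upwards [eventually_ge_atTop (expIter p),
      g.M_tendsto.eventually (eventually_ge_atTop (f.M σ₀))] with τ h1 h2
    exact ⟨h1, h2⟩
  obtain ⟨τ, hτε, hτEp, hτM⟩ := (hfreq.and_eventually hev).exists
  obtain ⟨σ, hσ1, hσ2⟩ := f.M_surj hτM
  refine ⟨σ, le_trans (le_trans (le_max_left _ _) (le_max_left _ _)) hσ1, ?_⟩
  have hσT₁ : T₁ ≤ σ := le_trans (le_trans (le_max_right _ _) (le_max_left _ _)) hσ1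
  have hσEq : expIter q ≤ σ := le_trans (le_trans (le_max_left _ _) (le_max_right _ _)) hσ1
  have hLq : (0:ℝ) < Real.log^[q] σ := lt_of_lt_of_le one_pos (logIter_ge_one q hσEq)
  have hLpτ : (0:ℝ) < Real.log^[p] τ := lt_of_lt_of_le one_pos (logIter_ge_one p hτEp)
  have h1 := hT₁ σ hσT₁
  have hstep1 : c * Real.log^[q] σ < Real.log^[m] (h.Minv (f.M σ)) := (lt_div_iff₀ hLq).1 h1
  have hstep2 : Real.log^[m] (h.Minv (g.M τ)) < ε * Real.log^[p] τ := (div_lt_iff₀ hLpτ).1 hτε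
  rw [hσ2] at hstep1
  have hminv : g.Minv (f.M σ) = τ := by rw [hσ2, g.minv_M]
  rw [hminv]
  have hchain : c * Real.log^[q] σ < ε * Real.log^[p] τ := lt_trans hstep1 hstep2
  have hεval : ε * K = c := by rw [hεdef]; field_simp
  have hfin : K * Real.log^[q] σ < Real.log^[p] τ := by
    have h7 : ε * (K * Real.log^[q] σ) < ε * Real.log^[p] τ := by
      calc ε * (K * Real.log^[q] σ) = (ε * K) * Real.log^[q] σ := by ring
        _ = c * Real.log^[q] σ := by rw [hεval]
        _ < ε * Real.log^[p] τ := hchain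
    exact lt_of_mul_lt_mul_left h7 hεpos.le
  have : K ≤ Real.log^[p] τ / Real.log^[q] σ := by
    rw [le_div_iff₀ hLq]
    linarith
  exact le_trans (le_max_left K0 1) this

lemma part_iv (hf1 : (0 : EReal) < relRittLowerOrder m q f h)
    (hf3 : relRittOrder m q f h < ⊤)
    (h0 : relRittLowerOrder m p g h = ⊤) : relRittOrder p q f g = 0 := by
  rw [relRittOrder] at hf3
  rw [relRittLowerOrder] at h0
  obtain ⟨C, hC0, hC⟩ := ereal_of_limsup_lt_top hf3
  rw [relRittOrder]
  have hcomp_g : Tendsto (fun σ => g.Minv (f.M σ)) atTop atTop :=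
    g.minv_tendsto.comp f.M_tendsto
  refine ereal_limsup_eq_zero ?_ (fun δ hδ => ?_)
  · filter_upwards [hcomp_g.eventually (eventually_ge_atTop (expIter p)),
      (logIter_tendsto q).eventually (eventually_ge_atTop 1)] with σ h1 h2
    exact div_nonneg (le_trans zero_le_one (logIter_ge_one p h1)) (by linarith)
  · set N : ℝ := 2*C/δ with hNdef
    have hNpos : (0:ℝ) < N := by positivity
    have hev := ereal_of_liminf_eq_top h0 N
    obtain ⟨T₀, hT₀⟩ := eventually_atTop.1 hev
    obtain ⟨Bp, hBp1, hBp2, hBp⟩ := logIter_double p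
    have hu_tendsto : Tendsto (fun σ => g.Minv (f.M σ) - 1) atTop atTop :=
      tendsto_atTop_add_const_right _ (-1) hcomp_g |>.congr (fun σ => by ring)
    have hgMu : Tendsto (fun σ => g.M (g.Minv (f.M σ) - 1)) atTop atTop :=
      g.M_tendsto.comp hu_tendsto
    have hhMinv : Tendsto (fun σ => h.Minv (g.M (g.Minv (f.M σ) - 1))) atTop atTop :=
      h.minv_tendsto.comp hgMu
    filter_upwards [hC,
      (logIter_tendsto q).eventually (eventually_ge_atTop 1),
      f.M_tendsto.eventually (eventually_gt_atTop (g.S 0)),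
      hcomp_g.eventually (eventually_ge_atTop
        (max (max (T₀+1) (Bp+1)) (max (expIter p + 1) 2))),
      hgMu.eventually (eventually_gt_atTop (h.S 0)),
      hhMinv.eventually (eventually_ge_atTop (expIter m))] with σ h1 h2 h3 h4 h5 h6
    set u : ℝ := g.Minv (f.M σ) with hu
    set τ' : ℝ := u - 1 with hτ'
    have hT₀u : T₀ ≤ τ' := by
      have := le_trans (le_trans (le_max_left _ _) (le_max_left _ _)) h4
      simp only [hτ']; linarith
    have hBpu : Bp ≤ τ' := by
      have := le_trans (le_trans (le_max_right _ _) (le_max_left _ _)) h4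
      simp only [hτ']; linarith
    have hEpu : expIter p ≤ τ' := by
      have := le_trans (le_trans (le_max_left _ _) (le_max_right _ _)) h4
      simp only [hτ']; linarith
    have hu2 : (2:ℝ) ≤ u := le_trans (le_trans (le_max_right _ _) (le_max_right _ _)) h4
    have hLq : (0:ℝ) < Real.log^[q] σ := by linarith
    have hLpτ' : (0:ℝ) < Real.log^[p] τ' := lt_of_lt_of_le one_pos (logIter_ge_one p hEpu)
    have hres := hT₀ τ' hT₀u
    have hstep1 : N * Real.log^[p] τ' < Real.log^[m] (h.Minv (g.M τ')) :=
      (lt_div_iff₀ hLpτ').1 hres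
    have hgM : g.M τ' < f.M σ := g.M_lt_of_lt_minv h3 (by simp only [hτ']; linarith)
    have hmono1 : h.Minv (g.M τ') ≤ h.Minv (f.M σ) := h.minv_mono h5 hgM.le
    have hmono2 : Real.log^[m] (h.Minv (g.M τ')) ≤ Real.log^[m] (h.Minv (f.M σ)) :=
      logIter_mono m h6 hmono1
    have hstep2 : Real.log^[m] (h.Minv (f.M σ)) < C * Real.log^[q] σ := (div_lt_iff₀ hLq).1 h1
    have hchain : N * Real.log^[p] τ' < C * Real.log^[q] σ :=
      lt_of_lt_of_le hstep1 (le_trans hmono2 hstep2.le)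
    have hstep3 : Real.log^[p] u ≤ Real.log^[p] (2*τ') :=
      logIter_mono p (le_trans hEpu (by simp only [hτ']; linarith)) (by simp only [hτ']; linarith)
    have hstep4 : Real.log^[p] (2*τ') ≤ 2 * Real.log^[p] τ' := hBp τ' hBpu
    have hfin : N * Real.log^[p] u < 2 * C * Real.log^[q] σ := by
      calc N * Real.log^[p] u ≤ N * (2 * Real.log^[p] τ') := by
            refine mul_le_mul_of_nonneg_left ?_ hNpos.le
            linarith
        _ = 2 * (N * Real.log^[p] τ') := by ring
        _ < 2 * (C * Real.log^[q] σ) := by linarith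
        _ = 2 * C * Real.log^[q] σ := by ring
    have hδN : δ * N = 2 * C := by rw [hNdef]; field_simp
    have : Real.log^[p] u / Real.log^[q] σ ≤ δ := by
      rw [div_le_iff₀ hLq]
      have h7 : N * Real.log^[p] u < N * (δ * Real.log^[q] σ) := by
        calc N * Real.log^[p] u < 2 * C * Real.log^[q] σ := hfin
          _ = (δ * N) * Real.log^[q] σ := by rw [hδN]
          _ = N * (δ * Real.log^[q] σ) := by ring
      have := lt_of_mul_lt_mul_left h7 hNpos.le
      linarith
    exact this

lemma part_iii (hf1 : (0 : EReal) < relRittLowerOrder m q f h)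
    (hf3 : relRittOrder m q f h < ⊤)
    (h0 : relRittOrder m p g h = ⊤) : relRittLowerOrder p q f g = 0 := by
  rw [relRittOrder] at hf3 h0
  obtain ⟨C, hC0, hC⟩ := ereal_of_limsup_lt_top hf3
  obtain ⟨T₂, hT₂⟩ := eventually_atTop.1 hC
  rw [relRittLowerOrder]
  have hcomp_g : Tendsto (fun σ => g.Minv (f.M σ)) atTop atTop :=
    g.minv_tendsto.comp f.M_tendsto
  refine ereal_liminf_eq_zero ?_ (fun δ hδ => ?_)
  · filter_upwards [hcomp_g.eventually (eventually_ge_atTop (expIter p)),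
      (logIter_tendsto q).eventually (eventually_ge_atTop 1)] with σ h1 h2
    exact div_nonneg (le_trans zero_le_one (logIter_ge_one p h1)) (by linarith)
  · set N : ℝ := 2*C/δ with hNdef
    have hNpos : (0:ℝ) < N := by positivity
    have hfreq := ereal_of_limsup_eq_top h0 N
    obtain ⟨Bq, hBq1, hBq2, hBq⟩ := logIter_double q
    rw [Filter.frequently_atTop]
    intro b
    -- fixed thresholds in σ'
    obtain ⟨W, hW⟩ := eventually_atTop.1 (
      (f.M_tendsto.eventually (eventually_gt_atTop (g.S 0))).and
      (hcomp_g.eventually (eventually_ge_atTop (expIter p))))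
    -- conditions on τ
    have hminv_f : Tendsto (fun τ => f.Minv (g.M τ)) atTop atTop :=
      f.minv_tendsto.comp g.M_tendsto
    have hminv_h : Tendsto (fun τ => h.Minv (g.M τ)) atTop atTop :=
      h.minv_tendsto.comp g.M_tendsto
    have hev : ∀ᶠ τ in atTop,
        (expIter p ≤ τ) ∧ (f.S 0 < g.M τ) ∧ (h.S 0 < g.M τ) ∧
        (expIter m ≤ h.Minv (g.M τ)) ∧
        (max (max (b + 1) (T₂)) (max (expIter q + 1) (max (Bq + 1) (max (W + 1) 2)))
          ≤ f.Minv (g.M τ)) := by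
      filter_upwards [eventually_ge_atTop (expIter p),
        g.M_tendsto.eventually (eventually_gt_atTop (f.S 0)),
        g.M_tendsto.eventually (eventually_gt_atTop (h.S 0)),
        hminv_h.eventually (eventually_ge_atTop (expIter m)),
        hminv_f.eventually (eventually_ge_atTop
          (max (max (b + 1) (T₂)) (max (expIter q + 1) (max (Bq + 1) (max (W + 1) 2)))))]
        with τ h1 h2 h3 h4 h5
      exact ⟨h1, h2, h3, h4, h5⟩
    obtain ⟨τ, hτN, hτEp, hτf, hτh, hτEm, hτv⟩ := (hfreq.and_eventually hev).exists
    set y : ℝ := g.M τ with hy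
    set v : ℝ := f.Minv y with hv
    have hvb : b + 1 ≤ v := le_trans (le_trans (le_max_left _ _) (le_max_left _ _)) hτv
    have hvT₂ : T₂ ≤ v := le_trans (le_trans (le_max_right _ _) (le_max_left _ _)) hτv
    have hvEq : expIter q + 1 ≤ v :=
      le_trans (le_trans (le_max_left _ _) (le_max_right _ _)) hτv
    have hvBq : Bq + 1 ≤ v :=
      le_trans (le_trans (le_trans (le_max_left _ _) (le_max_right _ _)) (le_max_right _ _)) hτv
    have hvW : W + 1 ≤ v :=
      le_trans (le_trans (le_trans (le_trans (le_max_left _ _) (le_max_right _ _))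
        (le_max_right _ _)) (le_max_right _ _)) hτv
    have hv2 : (2:ℝ) ≤ v :=
      le_trans (le_trans (le_trans (le_trans (le_max_right _ _) (le_max_right _ _))
        (le_max_right _ _)) (le_max_right _ _)) hτv
    obtain ⟨σ, hσ1, hσ2, hσ3⟩ := f.exists_near_minv hτf
    set σ'' : ℝ := v - 1/2 with hσ''
    have hWσ'' : W ≤ σ'' := by simp only [hσ'']; linarith
    obtain ⟨hWa, hWb⟩ := hW σ'' hWσ''
    have hLpτ : (0:ℝ) < Real.log^[p] τ := lt_of_lt_of_le one_pos (logIter_ge_one p hτEp)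
    have hLqσ'' : (0:ℝ) < Real.log^[q] σ'' :=
      lt_of_lt_of_le one_pos (logIter_ge_one q (by simp only [hσ'']; linarith))
    -- main chain : N * Lp τ < C * Lq σ
    have hstep1 : N * Real.log^[p] τ < Real.log^[m] (h.Minv y) := (lt_div_iff₀ hLpτ).1 hτN
    have hmono1 : h.Minv y ≤ h.Minv (f.M σ) := h.minv_mono hτh hσ1
    have hmono2 : Real.log^[m] (h.Minv y) ≤ Real.log^[m] (h.Minv (f.M σ)) :=
      logIter_mono m hτEm hmono1
    have hσT₂ : T₂ ≤ σ := le_trans hvT₂ hσ2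
    have hLqσ : (0:ℝ) < Real.log^[q] σ :=
      lt_of_lt_of_le one_pos (logIter_ge_one q (le_trans (by linarith) hσ2))
    have hstep2 : Real.log^[m] (h.Minv (f.M σ)) < C * Real.log^[q] σ :=
      (div_lt_iff₀ hLqσ).1 (hT₂ σ hσT₂)
    have hchain : N * Real.log^[p] τ < C * Real.log^[q] σ :=
      lt_of_lt_of_le hstep1 (le_trans hmono2 hstep2.le)
    -- Lq σ ≤ 2 * Lq σ''
    have hstepA : Real.log^[q] σ ≤ Real.log^[q] (2*σ'') := by
      refine logIter_mono q (le_trans (by linarith) hσ2) ?_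
      simp only [hσ'']; linarith
    have hstepB : Real.log^[q] (2*σ'') ≤ 2 * Real.log^[q] σ'' := by
      refine hBq σ'' ?_
      simp only [hσ'']; linarith
    -- numerator bound
    have hfMσ'' : f.M σ'' < y := f.M_lt_of_lt_minv hτf (by simp only [hσ'']; linarith)
    have hnum1 : g.Minv (f.M σ'') ≤ τ := by
      have h8 : g.Minv (f.M σ'') ≤ g.Minv y := g.minv_mono hWa hfMσ''.le
      rw [hy, g.minv_M] at h8
      exact h8
    have hnum2 : Real.log^[p] (g.Minv (f.M σ'')) ≤ Real.log^[p] τ :=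
      logIter_mono p hWb hnum1
    -- conclude
    refine ⟨σ'', by simp only [hσ'']; linarith, ?_⟩
    have hδN : δ * N = 2 * C := by rw [hNdef]; field_simp
    have hfin : Real.log^[p] τ < δ * Real.log^[q] σ'' := by
      have h7 : N * Real.log^[p] τ < N * (δ * Real.log^[q] σ'') := by
        calc N * Real.log^[p] τ < C * Real.log^[q] σ := hchain
          _ ≤ C * (2 * Real.log^[q] σ'') := by
              refine mul_le_mul_of_nonneg_left ?_ hC0.le
              linarith
          _ = (δ * N) * Real.log^[q] σ'' := by rw [hδN]; ring
          _ = N * (δ * Real.log^[q] σ'') := by ring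
      exact lt_of_mul_lt_mul_left h7 hNpos.le
    have : Real.log^[p] (g.Minv (f.M σ'')) / Real.log^[q] σ'' ≤ δ := by
      rw [div_le_iff₀ hLqσ'']
      linarith
    exact this

end MainParts

theorem stmt_7 (f : VVDS E) (g : VVDS F) (h : VVDS G) (p q m : ℕ)
    (hf1 : (0 : EReal) < relRittLowerOrder m q f h)
    (hf2 : relRittLowerOrder m q f h ≤ relRittOrder m q f h)
    (hf3 : relRittOrder m q f h < ⊤)
    :
    (relRittOrder m p g h = 0 → relRittLowerOrder p q f g = ⊤) ∧ (relRittLowerOrder m p g h = 0 → relRittOrder p q f g = ⊤) ∧ (relRittOrder m p g h = ⊤ → relRittLowerOrder p q f g = 0) ∧ (relRittLowerOrder m p g h = ⊤ → relRittOrder p q f g = 0) := by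
  exact ⟨part_i f g h p q m hf1, part_ii f g h p q m hf1,
    part_iii f g h p q m hf1 hf3, part_iv f g h p q m hf1 hf3⟩
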